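/- Let X be a compact metric space, T : X → X continuous, and φ : X → ℝ continuous with γ(φ) := sup_{n≥1, x∈X} (S_n φ(x) - n β(φ)) < +∞. If μ is a maximizing measure of φ (i.e., ∫ φ dμ = β(φ)) and ν is a T-invariant Borel probability measure with supp ν ⊆ supp μ, then ν is also a maximizing measure of φ. -/

import Mathlib

open MeasureTheory

noncomputable def beta {X : Type*} [TopologicalSpace X] [MeasurableSpace X]
    (T : X → X) (φ : X → ℝ) : ℝ :=
  sSup ((fun μ : Measure X => ∫ x, φ x ∂μ) ''
    {μ : Measure X | IsProbabilityMeasure μ ∧ μ.map T = μ})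

/-- topological support of a measure -/
def msupp {X : Type*} [TopologicalSpace X] [MeasurableSpace X] (μ : Measure X) : Set X :=
  {x | ∀ U : Set X, IsOpen U → x ∈ U → 0 < μ U}

open Filter Topology

private lemma map_iterate' {X : Type*} [TopologicalSpace X] [MeasurableSpace X] [BorelSpace X]
    {T : X → X} (hT : Continuous T) {μ : Measure X} (hinv : μ.map T = μ) (m : ℕ) :
    μ.map (T^[m]) = μ := by
  induction m with
  | zero => simp [Measure.map_id]
  | succ m ih =>
    rw [Function.iterate_succ', ← Measure.map_map hT.measurable (hT.iterate m).measurable, ih,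
      hinv]

private lemma cont_integrable' {X : Type*} [MetricSpace X] [CompactSpace X] [MeasurableSpace X]
    [BorelSpace X] {μ : Measure X} [IsFiniteMeasure μ] {f : X → ℝ} (hf : Continuous f) :
    Integrable f μ :=
  integrableOn_univ.mp (hf.continuousOn.integrableOn_compact isCompact_univ)

private lemma integral_comp_iterate' {X : Type*} [MetricSpace X] [CompactSpace X]
    [MeasurableSpace X] [BorelSpace X]
    {T : X → X} (hT : Continuous T) {φ : X → ℝ} (hφ : Continuous φ)
    {μ : Measure X} (hinv : μ.map T = μ) (m : ℕ) :
    ∫ x, φ (T^[m] x) ∂μ = ∫ x, φ x ∂μ := by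
  conv_rhs => rw [← map_iterate' hT hinv m]
  rw [integral_map (hT.iterate m).measurable.aemeasurable hφ.aestronglyMeasurable]

private lemma integral_birkhoff' {X : Type*} [MetricSpace X] [CompactSpace X]
    [MeasurableSpace X] [BorelSpace X]
    {T : X → X} (hT : Continuous T) {φ : X → ℝ} (hφ : Continuous φ)
    {μ : Measure X} [IsFiniteMeasure μ] (hinv : μ.map T = μ) (n : ℕ) :
    ∫ x, (∑ k ∈ Finset.range n, φ (T^[k] x)) ∂μ = n * ∫ x, φ x ∂μ := by
  rw [integral_finset_sum (Finset.range n) (f := fun k x => φ (T^[k] x))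
    (fun k _ => cont_integrable' (hφ.comp (hT.iterate k)))]
  simp [integral_comp_iterate' hT hφ hinv, Finset.sum_const, nsmul_eq_mul]

private lemma msupp_compl_null' {X : Type*} [MetricSpace X] [CompactSpace X] [MeasurableSpace X]
    [BorelSpace X] (ν : Measure X) : ν ((msupp ν)ᶜ) = 0 := by
  obtain ⟨b, hbc, -, hbB⟩ := TopologicalSpace.exists_countable_basis X
  have hsub : (msupp ν)ᶜ ⊆ ⋃₀ {u ∈ b | ν u = 0} := by
    intro x hx
    simp only [Set.mem_compl_iff, msupp, Set.mem_setOf_eq, not_forall] at hx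
    obtain ⟨U, hUo, hxU, hU0⟩ := hx
    have hU0' : ν U = 0 := le_zero_iff.mp (not_lt.1 hU0)
    obtain ⟨u, hub, hxu, huU⟩ := hbB.exists_subset_of_mem_open hxU hUo
    exact ⟨u, ⟨hub, measure_mono_null huU hU0'⟩, hxu⟩
  exact measure_mono_null hsub
    ((measure_sUnion_null_iff (hbc.mono (Set.sep_subset _ _))).2 fun s hs => hs.2)

private lemma key_lower' {X : Type*} [MetricSpace X] [CompactSpace X] [MeasurableSpace X]
    [BorelSpace X]
    {T : X → X} (hT : Continuous T) {φ : X → ℝ} (hφ : Continuous φ) {γ B : ℝ}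
    (hγ : ∀ n : ℕ, 1 ≤ n → ∀ x : X,
      ∑ k ∈ Finset.range n, φ (T^[k] x) - n * B ≤ γ)
    (hγ0 : 0 ≤ γ)
    {μ : Measure X} (hμp : IsProbabilityMeasure μ) (hμinv : μ.map T = μ)
    (hμmax : ∫ x, φ x ∂μ = B)
    {n : ℕ} (hn : 1 ≤ n) {x₀ : X} (hx₀ : x₀ ∈ msupp μ) :
    (n : ℝ) * B - γ ≤ ∑ k ∈ Finset.range n, φ (T^[k] x₀) := by
  by_contra hcon
  push_neg at hcon
  set g : X → ℝ := fun y => (∑ k ∈ Finset.range n, φ (T^[k] y)) - n * B with hgdef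
  have hgc : Continuous g :=
    (continuous_finset_sum _ fun k _ => hφ.comp (hT.iterate k)).sub continuous_const
  have hgx0 : g x₀ < -γ := by simp only [hgdef]; linarith
  set ε : ℝ := (-γ - g x₀) / 2 with hεdef
  have hε0 : 0 < ε := by simp only [hεdef]; linarith
  set U : Set X := g ⁻¹' (Set.Iio (-γ - ε)) with hUdef
  have hUo : IsOpen U := hgc.isOpen_preimage _ isOpen_Iio
  have hx0U : x₀ ∈ U := by
    simp only [hUdef, Set.mem_preimage, Set.mem_Iio, hεdef]; linarith
  have hU : 0 < μ U := hx₀ U hUo hx0U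
  set S : X → X := T^[n] with hSdef
  have hSm : MeasurePreserving S μ μ := ⟨(hT.iterate n).measurable, map_iterate' hT hμinv n⟩
  have hrec := hSm.conservative.ae_mem_imp_frequently_image_mem
    hUo.measurableSet.nullMeasurableSet
  set h : ℕ → X → ℝ := fun k y => ∑ j ∈ Finset.range k, g (S^[j] y) with hhdef
  have hhc : ∀ k, Continuous (h k) := fun k =>
    continuous_finset_sum _ fun j _ => hgc.comp (hT.iterate n |>.iterate j)
  -- cocycle
  have hcocycle : ∀ (j k : ℕ) (y : X), h (j + k) y = h j y + h k (S^[j] y) := by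
    intro j k y
    simp only [hhdef, Finset.sum_range_add]
    congr 1
    refine Finset.sum_congr rfl fun i _ => ?_
    rw [add_comm j i, Function.iterate_add_apply]
  -- identification with Birkhoff sums
  have hkSn : ∀ (k : ℕ) (y : X),
      h k y = (∑ m ∈ Finset.range (n * k), φ (T^[m] y)) - (n * k : ℕ) * B := by
    intro k
    induction k with
    | zero => simp [hhdef]
    | succ k ih =>
      intro y
      have h1 : h (k + 1) y = h k y + g (S^[k] y) :=
        Finset.sum_range_succ (fun j => g (S^[j] y)) k
      rw [h1, ih y]
      have h2 : n * (k + 1) = n * k + n := by ring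
      rw [h2, Finset.sum_range_add]
      have h3 : ∀ i, T^[n * k + i] y = T^[i] (S^[k] y) := by
        intro i
        rw [add_comm (n * k) i, Function.iterate_add_apply, hSdef, ← Function.iterate_mul]
      have h4 : (∑ i ∈ Finset.range n, φ (T^[n * k + i] y))
          = ∑ i ∈ Finset.range n, φ (T^[i] (S^[k] y)) :=
        Finset.sum_congr rfl fun i _ => by rw [h3 i]
      rw [h4]
      have hgeq : g (S^[k] y) = (∑ i ∈ Finset.range n, φ (T^[i] (S^[k] y))) - n * B := rfl
      rw [hgeq]
      push_cast
      ring
  -- upper bound on h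
  have hbound : ∀ (k : ℕ) (y : X), h k y ≤ γ := by
    intro k y
    rcases Nat.eq_zero_or_pos k with rfl | hk
    · simpa [hhdef] using hγ0
    · rw [hkSn k y]
      exact hγ (n * k) (Nat.one_le_iff_ne_zero.2 (Nat.mul_ne_zero (by omega) (by omega))) y
  -- integral of h is zero
  have hintzero : ∀ k : ℕ, ∫ y, h k y ∂μ = 0 := by
    intro k
    have h1 : ∫ y, h k y ∂μ
        = ∫ y, ((∑ m ∈ Finset.range (n * k), φ (T^[m] y)) - (n * k : ℕ) * B) ∂μ :=
      integral_congr_ae (Eventually.of_forall fun y => hkSn k y)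
    rw [h1, integral_sub (f := fun y => ∑ m ∈ Finset.range (n * k), φ (T^[m] y))
        (g := fun _ => ((n * k : ℕ) : ℝ) * B)
        (cont_integrable' (continuous_finset_sum _ fun m _ => hφ.comp (hT.iterate m)))
        (integrable_const _),
      integral_birkhoff' hT hφ hμinv, hμmax, integral_const]
    simp
  -- Claim E
  have claimE : ∀ y : X, (∃ᶠ j in atTop, S^[j] y ∈ U) →
      ∀ l : ℕ, ∃ J : ℕ, ∀ k ≥ J, h k y ≤ γ - l * ε := by
    intro y hy l
    induction l with
    | zero => exact ⟨0, fun k _ => by simpa using hbound k y⟩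
    | succ l ih =>
      obtain ⟨J, hJ⟩ := ih
      obtain ⟨j, hjU, hjJ⟩ := (hy.and_eventually (eventually_ge_atTop J)).exists
      refine ⟨j + 1, fun k hk => ?_⟩
      have h1 : h (j + 1) y = h j y + g (S^[j] y) :=
        Finset.sum_range_succ (fun i => g (S^[i] y)) j
      have h2 : g (S^[j] y) < -γ - ε := hjU
      have h3 : h j y ≤ γ - l * ε := hJ j hjJ
      have h4 : h k y = h (j + 1) y + h (k - (j + 1)) (S^[j+1] y) := by
        have := hcocycle (j + 1) (k - (j + 1)) y
        rwa [Nat.add_sub_cancel' hk] at this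
      have h5 : h (k - (j + 1)) (S^[j+1] y) ≤ γ := hbound _ _
      push_cast
      linarith
  -- tendsto atBot
  have htend : ∀ y : X, (∃ᶠ j in atTop, S^[j] y ∈ U) →
      Tendsto (fun k => h k y) atTop atBot := by
    intro y hy
    rw [tendsto_atBot]
    intro b
    obtain ⟨l, hl⟩ := exists_nat_gt ((γ - b) / ε)
    obtain ⟨J, hJ⟩ := claimE y hy l
    rw [div_lt_iff₀ hε0] at hl
    exact eventually_atTop.2 ⟨J, fun k hk => le_trans (hJ k hk) (by linarith)⟩
  -- Fatou contradiction
  set F : ℕ → X → ENNReal := fun k y => ENNReal.ofReal (γ - h k y) with hFdef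
  have hFmeas : ∀ k, Measurable (F k) := fun k =>
    (continuous_const.sub (hhc k)).measurable.ennreal_ofReal
  have hFint : ∀ k, ∫⁻ y, F k y ∂μ = ENNReal.ofReal γ := by
    intro k
    show ∫⁻ y, ENNReal.ofReal (γ - h k y) ∂μ = ENNReal.ofReal γ
    rw [← ofReal_integral_eq_lintegral_ofReal (f := fun y => γ - h k y)
      ((integrable_const γ).sub (cont_integrable' (hhc k)))
      (Eventually.of_forall fun y => sub_nonneg.2 (hbound k y))]
    rw [integral_sub (f := fun _ => γ) (g := fun y => h k y)
      (integrable_const γ) (cont_integrable' (hhc k)), hintzero k, integral_const]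
    simp
  have hFatou := lintegral_liminf_le hFmeas (μ := μ) (u := atTop)
  have hrhs : liminf (fun k => ∫⁻ y, F k y ∂μ) atTop = ENNReal.ofReal γ := by
    simp_rw [hFint]; exact liminf_const _
  have hlhstop : (⊤ : ENNReal) ≤ ∫⁻ y, liminf (fun k => F k y) atTop ∂μ := by
    have hae : ∀ᵐ y ∂μ.restrict U, liminf (fun k => F k y) atTop = ⊤ := by
      filter_upwards [ae_restrict_of_ae hrec, ae_restrict_mem hUo.measurableSet] with y hy hyU
      have h1 : Tendsto (fun k => γ - h k y) atTop atTop := by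
        rw [tendsto_atTop]
        intro b
        filter_upwards [tendsto_atBot.1 (htend y (hy hyU)) (γ - b)] with k hk
        linarith
      exact (ENNReal.tendsto_ofReal_atTop.comp h1).liminf_eq
    calc (⊤ : ENNReal) = ⊤ * μ U := (ENNReal.top_mul hU.ne').symm
      _ = ∫⁻ _ in U, (⊤ : ENNReal) ∂μ := (setLIntegral_const U ⊤).symm
      _ = ∫⁻ y in U, liminf (fun k => F k y) atTop ∂μ :=
        (lintegral_congr_ae (hae.mono fun y hy => hy.symm))
      _ ≤ ∫⁻ y, liminf (fun k => F k y) atTop ∂μ := setLIntegral_le_lintegral _ _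
  have : (⊤ : ENNReal) ≤ ENNReal.ofReal γ := by
    rw [← hrhs]; exact le_trans hlhstop hFatou
  exact absurd this (by simp [ENNReal.ofReal_lt_top.ne])

open Filter Topology in
/-- subordination principle: if `γ(φ) < ∞`, `μ` maximizes `φ`
and `supp ν ⊆ supp μ`, then `ν` also maximizes `φ`. -/
theorem stmt2 {X : Type*} [MetricSpace X] [CompactSpace X]
    [MeasurableSpace X] [BorelSpace X]
    (T : X → X) (hT : Continuous T)
    (φ : X → ℝ) (hφ : Continuous φ)
    (γ : ℝ)
    (hγ : ∀ n : ℕ, 1 ≤ n → ∀ x : X,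
      ∑ k ∈ Finset.range n, φ (T^[k] x) - n * beta T φ ≤ γ)
    (μ : Measure X) (hμp : IsProbabilityMeasure μ) (hμinv : μ.map T = μ)
    (hμmax : ∫ x, φ x ∂μ = beta T φ)
    (ν : Measure X) (hνp : IsProbabilityMeasure ν) (hνinv : ν.map T = ν)
    (hsupp : msupp ν ⊆ msupp μ) :
    ∫ x, φ x ∂ν = beta T φ := by
  set B := beta T φ with hBdef
  set I := ∫ x, φ x ∂ν with hIdef
  -- γ is nonnegative
  have hγ0 : 0 ≤ γ := by
    have h1 : ∀ x : X, φ x - B ≤ γ := fun x => by simpa using hγ 1 le_rfl x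
    have h2 : ∫ x, (φ x - B) ∂μ ≤ ∫ (_ : X), γ ∂μ :=
      integral_mono ((cont_integrable' hφ).sub (integrable_const B)) (integrable_const γ)
        fun x => h1 x
    rw [integral_sub (cont_integrable' hφ) (integrable_const B)] at h2
    simp only [integral_const, measure_univ, probReal_univ, ENNReal.toReal_one, smul_eq_mul, one_mul] at h2
    linarith [hμmax]
  -- ν gives full measure to msupp μ
  have hν0 : ∀ᵐ x ∂ν, x ∈ msupp μ := by
    exact mem_ae_iff.mpr
      (measure_mono_null (Set.compl_subset_compl.2 hsupp) (msupp_compl_null' ν))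
  -- upper and lower bounds for each n
  have hbounds : ∀ n : ℕ, 1 ≤ n → |(n : ℝ) * (I - B)| ≤ γ := by
    intro n hn
    have hSn : ∫ x, (∑ k ∈ Finset.range n, φ (T^[k] x)) ∂ν = n * I :=
      integral_birkhoff' hT hφ hνinv n
    have hSnInt : Integrable (fun x => ∑ k ∈ Finset.range n, φ (T^[k] x)) ν :=
      cont_integrable' (continuous_finset_sum _ fun k _ => hφ.comp (hT.iterate k))
    have hupper : (n : ℝ) * I - n * B ≤ γ := by
      have h2 : ∫ x, (∑ k ∈ Finset.range n, φ (T^[k] x)) ∂ν ≤ ∫ (_ : X), (γ + n * B) ∂ν :=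
        integral_mono hSnInt (integrable_const _) fun x => by linarith [hγ n hn x]
      rw [hSn, integral_const] at h2
      simp only [measure_univ, probReal_univ, ENNReal.toReal_one, smul_eq_mul, one_mul] at h2
      linarith
    have hlower : (n : ℝ) * B - γ ≤ n * I := by
      have h2 : ∫ (_ : X), ((n : ℝ) * B - γ) ∂ν
          ≤ ∫ x, (∑ k ∈ Finset.range n, φ (T^[k] x)) ∂ν := by
        refine integral_mono_ae (integrable_const _) hSnInt ?_
        filter_upwards [hν0] with x hx
        exact key_lower' hT hφ hγ hγ0 hμp hμinv hμmax hn hx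
      rw [hSn, integral_const] at h2
      simp only [measure_univ, probReal_univ, ENNReal.toReal_one, smul_eq_mul, one_mul] at h2
      linarith
    rw [abs_le]
    constructor <;> [nlinarith; nlinarith]
  -- conclude I = B
  by_contra hne
  have hd : 0 < |I - B| := abs_pos.2 (sub_ne_zero.2 hne)
  obtain ⟨n, hn⟩ := exists_nat_gt (γ / |I - B|)
  have hn1 : 1 ≤ n := by
    by_contra hc
    interval_cases n
    · simp only [Nat.cast_zero] at hn
      exact absurd hn (not_lt.2 (div_nonneg hγ0 hd.le))
  have := hbounds n hn1
  rw [abs_mul, abs_of_nonneg (by positivity : (0:ℝ) ≤ (n:ℝ))] at this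
  rw [div_lt_iff₀ hd] at hn
  linarith
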